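/- There exists a unique family of functions q_1,…,q_n : α → ℝ satisfying the fixed-point equations q_i(x) = π_i·p_data_i(x) + Σ_{j=1}^n π_{ij}·q_j(x) for all i ∈ {1,…,n} and all x ∈ α. -/

import Mathlib

theorem fixedPoint_exists_unique {α : Type*} [Fintype α] [Nonempty α] (n : ℕ) (hn : 0 < n)
    (B : Fin n → Fin n → ℝ) (hB : ∀ i j, 0 ≤ B i j) (hrow : ∀ i, ∑ j, B i j < 1)
    (pdata : Fin n → α → ℝ) (hpd_pos : ∀ i x, 0 < pdata i x)
    (hpd_sum : ∀ i, ∑ x, pdata i x = 1) :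
    ∃! q : Fin n → α → ℝ,
      ∀ i x, q i x = (1 - ∑ j, B i j) * pdata i x + ∑ j, B i j * q j x := by
  haveI : Nonempty (Fin n) := ⟨⟨0, hn⟩⟩
  set c : ℝ := Finset.univ.sup' Finset.univ_nonempty (fun i => ∑ j, B i j) with hc
  have hc0 : 0 ≤ c := by
    obtain ⟨i⟩ := (inferInstance : Nonempty (Fin n))
    exact le_trans (Finset.sum_nonneg fun j _ => hB i j)
      (Finset.le_sup' (fun i => ∑ j, B i j) (Finset.mem_univ i))
  have hc1 : c < 1 := by
    rw [hc]
    exact (Finset.sup'_lt_iff _).2 fun i _ => hrow i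
  set K : NNReal := ⟨c, hc0⟩ with hK
  set T : (Fin n → α → ℝ) → (Fin n → α → ℝ) :=
    fun q i x => (1 - ∑ j, B i j) * pdata i x + ∑ j, B i j * q j x with hT
  have hLip : LipschitzWith K T := by
    intro p q
    rw [edist_dist, edist_dist,
      show ((K : NNReal) : ENNReal) = ENNReal.ofReal c from by
        simp [hK, ENNReal.ofReal, Real.toNNReal_of_nonneg hc0]; rfl,
      ← ENNReal.ofReal_mul hc0]
    apply ENNReal.ofReal_le_ofReal
    have hd0 : 0 ≤ dist p q := dist_nonneg
    rw [dist_pi_le_iff (mul_nonneg hc0 hd0)]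
    intro i
    rw [dist_pi_le_iff (mul_nonneg hc0 hd0)]
    intro x
    have key : ∀ j, |p j x - q j x| ≤ dist p q := by
      intro j
      calc |p j x - q j x| = dist (p j x) (q j x) := (Real.dist_eq _ _).symm
        _ ≤ dist (p j) (q j) := dist_le_pi_dist _ _ x
        _ ≤ dist p q := dist_le_pi_dist _ _ j
    calc dist (T p i x) (T q i x) = |∑ j, B i j * (p j x - q j x)| := by
          rw [Real.dist_eq]
          congr 1
          simp only [hT]
          rw [add_sub_add_left_eq_sub, ← Finset.sum_sub_distrib]
          exact Finset.sum_congr rfl fun j _ => (mul_sub _ _ _).symm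
      _ ≤ ∑ j, |B i j * (p j x - q j x)| := Finset.abs_sum_le_sum_abs _ _
      _ = ∑ j, B i j * |p j x - q j x| := by
          refine Finset.sum_congr rfl fun j _ => ?_
          rw [abs_mul, abs_of_nonneg (hB i j)]
      _ ≤ ∑ j, B i j * dist p q := by
          exact Finset.sum_le_sum fun j _ => mul_le_mul_of_nonneg_left (key j) (hB i j)
      _ = (∑ j, B i j) * dist p q := by rw [Finset.sum_mul]
      _ ≤ c * dist p q :=
          mul_le_mul_of_nonneg_right (Finset.le_sup' (fun i => ∑ j, B i j) (Finset.mem_univ i)) hd0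
  have hContr : ContractingWith K T := ⟨by exact_mod_cast hc1, hLip⟩
  refine ⟨hContr.fixedPoint T, ?_, ?_⟩
  · intro i x
    have := hContr.fixedPoint_isFixedPt
    conv_lhs => rw [← this]
  · intro q hq
    refine hContr.fixedPoint_unique ?_
    funext i
    funext x
    exact (hq i x).symm
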